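/- Suppose the pair (λ,β) is T-log-symplectic and let S ⊆ S(λ,β). Say S satisfies (W1) if no element w of S_{≥2} has all entries ≥ −1 and |J_w| ≤ 1, and say S satisfies (W2) if there exists an integer M such that for all m ≥ M no element w of S_m has all entries ≥ −1 and |J_w| ≤ 2. Then: if S satisfies (W1), then S satisfies (W2); and if S satisfies (W2), then S is linearly independent over ℂ. -/

import Mathlib

open Finset Matrix

noncomputable section

/-- The standard embedding of an integer vector into `ℂⁿ`. -/
def cvec {n : ℕ} (w : Fin n → ℤ) : Fin n → ℂ := fun j => (w j : ℂ)

/-- `J_w = { j : w_j = -1 }`. -/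
def Jset {n : ℕ} (w : Fin n → ℤ) : Finset (Fin n) :=
  Finset.univ.filter (fun j => w j = -1)

/-- The linear map `β : ℂⁿ → V`, `w ↦ ∑ w_j β_j`. -/
def bmap {n : ℕ} {V : Type*} [AddCommGroup V] [Module ℂ V]
    (β : Fin n → V) (w : Fin n → ℂ) : V :=
  ∑ j, w j • β j

/-- The pair `(λ, β)` is T-log-symplectic. -/
def TLogSymp {n : ℕ} {V : Type*} [AddCommGroup V] [Module ℂ V]
    (M : Matrix (Fin n) (Fin n) ℂ) (β : Fin n → V) : Prop :=
  ∀ w : Fin n → ℂ, M.mulVec w = 0 → bmap β w = 0 → w = 0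

/-- The set `W(λ, β)`. -/
def Wset {n : ℕ} {V : Type*} [AddCommGroup V] [Module ℂ V]
    (M : Matrix (Fin n) (Fin n) ℂ) (β : Fin n → V) : Set (Fin n → ℤ) :=
  {w | (∀ j, -1 ≤ w j) ∧ (∀ j, j ∉ Jset w → M.mulVec (cvec w) j = 0) ∧
    bmap β (cvec w) = 0}

/-- The set `S(λ, β)` of smoothable weights. -/
def Sset {n : ℕ} {V : Type*} [AddCommGroup V] [Module ℂ V]
    (M : Matrix (Fin n) (Fin n) ℂ) (β : Fin n → V) : Set (Fin n → ℤ) :=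
  {θ | θ ∈ Wset M β ∧ (Jset θ).card = 2}

/-- `S_m`: sums of exactly `m` elements of `S`, repetitions allowed. -/
def SumOf {n : ℕ} (S : Set (Fin n → ℤ)) (m : ℕ) : Set (Fin n → ℤ) :=
  {w | ∃ l : Multiset (Fin n → ℤ), (∀ x ∈ l, x ∈ S) ∧ Multiset.card l = m ∧ l.sum = w}

/-- `S_{≥ m}`: sums of at least `m` elements of `S`, repetitions allowed. -/
def SumGE {n : ℕ} (S : Set (Fin n → ℤ)) (m : ℕ) : Set (Fin n → ℤ) :=
  {w | ∃ m', m ≤ m' ∧ w ∈ SumOf S m'}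

/-- A vector `w ∈ ℤⁿ` is negatively bordered. -/
def NegBordered {n : ℕ} (w : Fin n → ℤ) : Prop :=
  ∃ j k : Fin n, j < k ∧ w j = -1 ∧ w k = -1 ∧ (∀ i, i < j → w i = 0) ∧
    (∀ i, k < i → w i = 0) ∧ (∀ i, j < i → i < k → 0 ≤ w i)

section AuxA
variable {n : ℕ} {V : Type*} [AddCommGroup V] [Module ℂ V]
variable {M : Matrix (Fin n) (Fin n) ℂ} {β : Fin n → V}

lemma mem_Jset {w : Fin n → ℤ} {j : Fin n} : j ∈ Jset w ↔ w j = -1 := by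
  simp [Jset]

lemma skew_pair (hskew : Mᵀ = -M) (u v : Fin n → ℂ) :
    u ⬝ᵥ (M *ᵥ v) + v ⬝ᵥ (M *ᵥ u) = 0 := by
  have hM : ∀ j k, M k j = - M j k := by
    intro j k
    have := congrFun (congrFun hskew j) k
    simpa [Matrix.transpose_apply, Matrix.neg_apply] using this
  have h1 : u ⬝ᵥ (M *ᵥ v) = ∑ j, ∑ k, u j * (M j k * v k) := by
    simp [dotProduct, Matrix.mulVec, Finset.mul_sum]
  have h2 : v ⬝ᵥ (M *ᵥ u) = ∑ j, ∑ k, v k * (M k j * u j) := by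
    rw [Finset.sum_comm]
    simp [dotProduct, Matrix.mulVec, Finset.mul_sum]
  rw [h1, h2, ← Finset.sum_add_distrib]
  apply Finset.sum_eq_zero
  intro j _
  rw [← Finset.sum_add_distrib]
  apply Finset.sum_eq_zero
  intro k _
  rw [hM j k]; ring

lemma theta_neg_one {θ : Fin n → ℤ} {j : Fin n} (hj : j ∈ Jset θ) : (cvec θ) j = -1 := by
  have := mem_Jset.1 hj
  simp [cvec, this]

lemma theta_cast {θ : Fin n → ℤ} (j : Fin n) : (cvec θ) j = ((θ j : ℤ) : ℂ) := rfl

lemma Sset_pair {θ : Fin n → ℤ} (hθ : θ ∈ Sset M β) {v : Fin n} (hv : v ∈ Jset θ) :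
    ∃ p, p ≠ v ∧ Jset θ = {v, p} := by
  obtain ⟨x, y, hxy, hJ⟩ := Finset.card_eq_two.1 hθ.2
  rw [hJ] at hv
  rcases Finset.mem_insert.1 hv with h | h
  · subst h
    exact ⟨y, fun hc => hxy hc.symm, hJ⟩
  · have h' : v = y := by simpa using h
    subst h'
    exact ⟨x, hxy, by rw [hJ, Finset.pair_comm]⟩

lemma zsum_pair (hskew : Mᵀ = -M) {θ : Fin n → ℤ} (hθ : θ ∈ Sset M β) {v p : Fin n}
    (hvp : p ≠ v) (hJ : Jset θ = {v, p}) :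
    (M *ᵥ cvec θ) p = - (M *ᵥ cvec θ) v := by
  have h2 := skew_pair hskew (cvec θ) (cvec θ)
  have h0 : cvec θ ⬝ᵥ (M *ᵥ cvec θ) = 0 := by linear_combination h2 / 2
  have hres : cvec θ ⬝ᵥ (M *ᵥ cvec θ)
      = ∑ j ∈ ({v, p} : Finset (Fin n)), cvec θ j * (M *ᵥ cvec θ) j := by
    rw [dotProduct]
    refine (Finset.sum_subset (Finset.subset_univ _) ?_).symm
    intro j _ hj
    rw [hθ.1.2.1 j (by rw [hJ]; exact hj), mul_zero]
  rw [hres, Finset.sum_pair (fun hc => hvp hc.symm)] at h0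
  have hv1 : cvec θ v = -1 := theta_neg_one (by rw [hJ]; exact Finset.mem_insert_self v {p})
  have hp1 : cvec θ p = -1 := theta_neg_one (by rw [hJ]; simp)
  rw [hv1, hp1] at h0
  linear_combination -h0

lemma znonzero (hskew : Mᵀ = -M) (hTLS : TLogSymp M β) {θ : Fin n → ℤ}
    (hθ : θ ∈ Sset M β) {v : Fin n} (hv : v ∈ Jset θ) :
    (M *ᵥ cvec θ) v ≠ 0 := by
  intro hz
  obtain ⟨p, hpv, hJ⟩ := Sset_pair hθ hv
  have hzp : (M *ᵥ cvec θ) p = 0 := by rw [zsum_pair hskew hθ hpv hJ, hz, neg_zero]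
  have hzero : M *ᵥ cvec θ = 0 := by
    funext j
    by_cases hj : j ∈ Jset θ
    · rw [hJ] at hj
      rcases Finset.mem_insert.1 hj with h | h
      · rw [h]; exact hz
      · have : j = p := by simpa using h
        rw [this]; exact hzp
    · exact hθ.1.2.1 j hj
  have := hTLS (cvec θ) hzero hθ.1.2.2
  have hc := congrFun this v
  rw [theta_neg_one hv] at hc
  norm_num at hc

lemma Jset_inj (hskew : Mᵀ = -M) (hTLS : TLogSymp M β) {θ θ' : Fin n → ℤ}
    (hθ : θ ∈ Sset M β) (hθ' : θ' ∈ Sset M β) (hJJ : Jset θ = Jset θ') : θ = θ' := by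
  obtain ⟨x, y, hxy, hJ⟩ := Finset.card_eq_two.1 hθ.2
  have hyx : y ≠ x := fun hc => hxy hc.symm
  have hJ' : Jset θ' = {x, y} := by rw [← hJJ, hJ]
  have hx : x ∈ Jset θ := by rw [hJ]; simp
  have hx' : x ∈ Jset θ' := by rw [hJ']; simp
  have hzy : (M *ᵥ cvec θ) y = - (M *ᵥ cvec θ) x := zsum_pair hskew hθ hyx hJ
  have hzy' : (M *ᵥ cvec θ') y = - (M *ᵥ cvec θ') x := zsum_pair hskew hθ' hyx hJ'
  set a : ℂ := (M *ᵥ cvec θ) x with ha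
  set b : ℂ := (M *ᵥ cvec θ') x with hb
  have hMu : M *ᵥ (b • cvec θ - a • cvec θ') = 0 := by
    rw [Matrix.mulVec_sub, Matrix.mulVec_smul, Matrix.mulVec_smul]
    funext j
    simp only [Pi.sub_apply, Pi.smul_apply, smul_eq_mul, Pi.zero_apply]
    by_cases hj : j ∈ Jset θ
    · rw [hJ] at hj
      rcases Finset.mem_insert.1 hj with h | h
      · subst h; ring
      · have hjy : j = y := by simpa using h
        subst hjy; rw [hzy, hzy']; ring
    · rw [hθ.1.2.1 j hj, hθ'.1.2.1 j (by rw [← hJJ]; exact hj)]; ring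
  have hbu : bmap β (b • cvec θ - a • cvec θ') = 0 := by
    have hb1 := hθ.1.2.2
    have hb2 := hθ'.1.2.2
    simp only [bmap] at *
    have hterm : ∀ j : Fin n, ((b • cvec θ - a • cvec θ') j) • β j
        = b • ((cvec θ j) • β j) - a • ((cvec θ' j) • β j) := by
      intro j
      simp only [Pi.sub_apply, Pi.smul_apply, smul_eq_mul]
      rw [sub_smul, smul_smul, smul_smul]
    rw [Finset.sum_congr rfl (fun j _ => hterm j), Finset.sum_sub_distrib,
      ← Finset.smul_sum, ← Finset.smul_sum, hb1, hb2, smul_zero, smul_zero, sub_zero]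
  have hu0 : b • cvec θ - a • cvec θ' = 0 := hTLS _ hMu hbu
  have hzx : a ≠ 0 := znonzero hskew hTLS hθ hx
  have hzx' : b ≠ 0 := znonzero hskew hTLS hθ' hx'
  have hxx : b * cvec θ x - a * cvec θ' x = 0 := by
    have := congrFun hu0 x
    simpa using this
  rw [theta_neg_one hx, theta_neg_one hx'] at hxx
  have hzz : a = b := by linear_combination hxx
  funext j
  have hj := congrFun hu0 j
  simp only [Pi.sub_apply, Pi.smul_apply, smul_eq_mul, Pi.zero_apply] at hj
  rw [← hzz] at hj
  have hcc : ((θ j : ℤ) : ℂ) = ((θ' j : ℤ) : ℂ) :=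
    mul_left_cancel₀ hzx (by linear_combination hj : a * cvec θ j = a * cvec θ' j)
  exact_mod_cast hcc

end AuxA


section AuxB
variable {n : ℕ} {V : Type*} [AddCommGroup V] [Module ℂ V]
variable {M : Matrix (Fin n) (Fin n) ℂ} {β : Fin n → V}

lemma off_nonneg {θ : Fin n → ℤ} (hθW : θ ∈ Wset M β) {p : Fin n}
    (hp : p ∉ Jset θ) : 0 ≤ θ p := by
  have h1 := hθW.1 p
  have h2 : ¬ θ p = -1 := fun hc => hp (mem_Jset.2 hc)
  omega

/-- Pairing identity for two distinct smoothable weights sharing a vertex. -/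
lemma pairing (hskew : Mᵀ = -M) (hTLS : TLogSymp M β) {θ θ' : Fin n → ℤ}
    (hθ : θ ∈ Sset M β) (hθ' : θ' ∈ Sset M β) (hne : θ ≠ θ') {v p p' : Fin n}
    (hpv : p ≠ v) (hpv' : p' ≠ v) (hJ : Jset θ = {v, p}) (hJ' : Jset θ' = {v, p'}) :
    (M *ᵥ cvec θ) v * ((1 + θ' p : ℤ) : ℂ) + (M *ᵥ cvec θ') v * ((1 + θ p' : ℤ) : ℂ) = 0
      ∧ 0 < 1 + θ' p ∧ 0 < 1 + θ p' := by
  have hvJ : v ∈ Jset θ := by rw [hJ]; simp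
  have hvJ' : v ∈ Jset θ' := by rw [hJ']; simp
  have hpJ : p ∈ Jset θ := by rw [hJ]; simp
  have hpJ' : p' ∈ Jset θ' := by rw [hJ']; simp
  -- p ∉ Jset θ', p' ∉ Jset θ
  have hpnot : p ∉ Jset θ' := by
    intro hc
    rw [hJ'] at hc
    rcases Finset.mem_insert.1 hc with h | h
    · exact hpv h
    · have : p = p' := by simpa using h
      subst this
      exact hne (Jset_inj hskew hTLS hθ hθ' (by rw [hJ, hJ']))
  have hpnot' : p' ∉ Jset θ := by
    intro hc
    rw [hJ] at hc
    rcases Finset.mem_insert.1 hc with h | h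
    · exact hpv' h
    · have : p' = p := by simpa using h
      subst this
      exact hne (Jset_inj hskew hTLS hθ hθ' (by rw [hJ, hJ']))
  refine ⟨?_, by have := off_nonneg hθ'.1 hpnot; omega,
    by have := off_nonneg hθ.1 hpnot'; omega⟩
  have hsp := skew_pair hskew (cvec θ') (cvec θ)
  have hzp : (M *ᵥ cvec θ) p = - (M *ᵥ cvec θ) v := zsum_pair hskew hθ hpv hJ
  have hzp' : (M *ᵥ cvec θ') p' = - (M *ᵥ cvec θ') v := zsum_pair hskew hθ' hpv' hJ'
  have e1 : cvec θ' ⬝ᵥ (M *ᵥ cvec θ)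
      = ∑ j ∈ ({v, p} : Finset (Fin n)), cvec θ' j * (M *ᵥ cvec θ) j := by
    rw [dotProduct]
    refine (Finset.sum_subset (Finset.subset_univ _) ?_).symm
    intro j _ hj
    rw [hθ.1.2.1 j (by rw [hJ]; exact hj), mul_zero]
  have e2 : cvec θ ⬝ᵥ (M *ᵥ cvec θ')
      = ∑ j ∈ ({v, p'} : Finset (Fin n)), cvec θ j * (M *ᵥ cvec θ') j := by
    rw [dotProduct]
    refine (Finset.sum_subset (Finset.subset_univ _) ?_).symm
    intro j _ hj
    rw [hθ'.1.2.1 j (by rw [hJ']; exact hj), mul_zero]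
  rw [e1, e2, Finset.sum_pair (fun hc => hpv hc.symm),
    Finset.sum_pair (fun hc => hpv' hc.symm)] at hsp
  rw [theta_neg_one hvJ', theta_neg_one hvJ, theta_cast, theta_cast, hzp, hzp'] at hsp
  push_cast at hsp ⊢
  linear_combination -hsp

lemma no_three (hskew : Mᵀ = -M) (hTLS : TLogSymp M β) {θ1 θ2 θ3 : Fin n → ℤ}
    (h1 : θ1 ∈ Sset M β) (h2 : θ2 ∈ Sset M β) (h3 : θ3 ∈ Sset M β)
    (h12 : θ1 ≠ θ2) (h13 : θ1 ≠ θ3) (h23 : θ2 ≠ θ3) {v : Fin n}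
    (hv1 : v ∈ Jset θ1) (hv2 : v ∈ Jset θ2) (hv3 : v ∈ Jset θ3) : False := by
  obtain ⟨p1, hp1, hJ1⟩ := Sset_pair h1 hv1
  obtain ⟨p2, hp2, hJ2⟩ := Sset_pair h2 hv2
  obtain ⟨p3, hp3, hJ3⟩ := Sset_pair h3 hv3
  obtain ⟨eq12, hA12, hA21⟩ := pairing hskew hTLS h1 h2 h12 hp1 hp2 hJ1 hJ2
  obtain ⟨eq13, hA13, hA31⟩ := pairing hskew hTLS h1 h3 h13 hp1 hp3 hJ1 hJ3
  obtain ⟨eq23, hA23, hA32⟩ := pairing hskew hTLS h2 h3 h23 hp2 hp3 hJ2 hJ3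
  set z1 := (M *ᵥ cvec θ1) v
  set z2 := (M *ᵥ cvec θ2) v
  set z3 := (M *ᵥ cvec θ3) v
  set A12 : ℤ := 1 + θ2 p1
  set A21 : ℤ := 1 + θ1 p2
  set A13 : ℤ := 1 + θ3 p1
  set A31 : ℤ := 1 + θ1 p3
  set A23 : ℤ := 1 + θ3 p2
  set A32 : ℤ := 1 + θ2 p3
  have key : z3 * ((A13 * A21 * A32 + A12 * A23 * A31 : ℤ) : ℂ) = 0 := by
    push_cast
    linear_combination (-(A13 : ℂ) * (A23 : ℂ)) * eq12 + ((A13 : ℂ) * (A21 : ℂ)) * eq23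
      + ((A12 : ℂ) * (A23 : ℂ)) * eq13
  have hz3 : z3 ≠ 0 := znonzero hskew hTLS h3 hv3
  have hpos : (0 : ℤ) < A13 * A21 * A32 + A12 * A23 * A31 := by
    have := mul_pos (mul_pos hA13 hA21) hA32
    have := mul_pos (mul_pos hA12 hA23) hA31
    omega
  rcases mul_eq_zero.1 key with h | h
  · exact hz3 h
  · rw [Int.cast_eq_zero] at h
    omega

end AuxB


set_option linter.unusedSectionVars false
set_option linter.unusedVariables false
section AuxC
variable {α : Type*} [DecidableEq α]

lemma multiset_card_count (l : Multiset α) (T : Finset α) (hT : ∀ x ∈ l, x ∈ T) :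
    Multiset.card l = ∑ a ∈ T, l.count a := by
  induction l using Multiset.induction_on with
  | empty => simp
  | cons a t ih =>
    have haT : a ∈ T := hT a (Multiset.mem_cons_self a t)
    have ht : ∀ x ∈ t, x ∈ T := fun x hx => hT x (Multiset.mem_cons_of_mem hx)
    rw [Multiset.card_cons, ih ht]
    have : ∀ x ∈ T, (a ::ₘ t).count x = t.count x + if x = a then 1 else 0 := by
      intro x _; rw [Multiset.count_cons]
    rw [Finset.sum_congr rfl this, Finset.sum_add_distrib, Finset.sum_ite_eq' T a (fun _ => 1),
      if_pos haT]

variable {G : Type*} [AddCommGroup G]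

lemma multiset_sum_count' (l : Multiset G) [DecidableEq G] (T : Finset G)
    (hT : ∀ x ∈ l, x ∈ T) :
    l.sum = ∑ a ∈ T, l.count a • a := by
  induction l using Multiset.induction_on with
  | empty => simp
  | cons a t ih =>
    have haT : a ∈ T := hT a (Multiset.mem_cons_self a t)
    have ht : ∀ x ∈ t, x ∈ T := fun x hx => hT x (Multiset.mem_cons_of_mem hx)
    rw [Multiset.sum_cons, ih ht]
    have : ∀ x ∈ T, (a ::ₘ t).count x • x = t.count x • x + (if x = a then x else 0) := by
      intro x _
      rw [Multiset.count_cons, add_nsmul]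
      congr 1
      by_cases h : x = a <;> simp [h]
    rw [Finset.sum_congr rfl this, Finset.sum_add_distrib,
      Finset.sum_ite_eq' T a (fun x => x), if_pos haT]
    abel

lemma repl_card {ι : Type*} (T : Finset ι) (g : ι → ℕ) (f : ι → α) :
    Multiset.card (∑ i ∈ T, Multiset.replicate (g i) (f i)) = ∑ i ∈ T, g i := by
  classical
  induction T using Finset.induction_on with
  | empty => simp
  | insert _ _ hnotmem ih => rename_i a s
                             rw [Finset.sum_insert hnotmem, Multiset.card_add,
                               Multiset.card_replicate, ih, Finset.sum_insert hnotmem]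

lemma repl_sum {ι : Type*} (T : Finset ι) (g : ι → ℕ) (f : ι → G) :
    (∑ i ∈ T, Multiset.replicate (g i) (f i)).sum = ∑ i ∈ T, g i • f i := by
  classical
  induction T using Finset.induction_on with
  | empty => simp
  | insert _ _ hnotmem ih => rename_i a s
                             rw [Finset.sum_insert hnotmem, Multiset.sum_add,
                               Multiset.sum_replicate, ih, Finset.sum_insert hnotmem]

lemma repl_mem {ι : Type*} (T : Finset ι) (g : ι → ℕ) (f : ι → α) (x : α)
    (hx : x ∈ ∑ i ∈ T, Multiset.replicate (g i) (f i)) : ∃ i ∈ T, x = f i := by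
  obtain ⟨i, hi, hxi⟩ := Multiset.mem_sum.1 hx
  exact ⟨i, hi, Multiset.eq_of_mem_replicate hxi⟩

end AuxC

section AuxD
variable {n : ℕ} {V : Type*} [AddCommGroup V] [Module ℂ V]
variable {M : Matrix (Fin n) (Fin n) ℂ} {β : Fin n → V}

/-- Swap lemma: mulVec of a finite linear combination. -/
lemma mulVec_comb {ι : Type*} (T : Finset ι) (c : ι → ℂ) (θ : ι → Fin n → ℂ) (v : Fin n) :
    (M *ᵥ (fun j => ∑ t ∈ T, c t * θ t j)) v = ∑ t ∈ T, c t * (M *ᵥ θ t) v := by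
  simp only [Matrix.mulVec, dotProduct, Finset.mul_sum]
  rw [Finset.sum_comm]
  refine Finset.sum_congr rfl fun t _ => ?_
  refine Finset.sum_congr rfl fun k _ => ?_
  ring

end AuxD


section Master
variable {n : ℕ} {V : Type*} [AddCommGroup V] [Module ℂ V]
variable {M : Matrix (Fin n) (Fin n) ℂ} {β : Fin n → V}

lemma Jset_zero : Jset (0 : Fin n → ℤ) = ∅ := by
  apply Finset.eq_empty_of_forall_notMem
  intro j hj
  have := mem_Jset.1 hj
  simp at this

lemma master_pos (hskew : Mᵀ = -M) (hTLS : TLogSymp M β) {S : Set (Fin n → ℤ)}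
    (hS : S ⊆ Sset M β) [Fintype ↥S]
    (hW2 : ∃ M₀ : ℕ, ∀ m, M₀ ≤ m → ∀ w ∈ SumOf S m,
      ¬((∀ j, -1 ≤ w j) ∧ (Jset w).card ≤ 2))
    (h : ↥S → ℤ) (Hrel : ∑ t : ↥S, h t • (t : Fin n → ℤ) = 0)
    (t₀ : ↥S) (hpos : 0 < h t₀) : False := by
  classical
  have hSm : ∀ t : ↥S, (t : Fin n → ℤ) ∈ Sset M β := fun t => hS t.2
  have hvalne : ∀ {t t' : ↥S}, t ≠ t' → (t : Fin n → ℤ) ≠ (t' : Fin n → ℤ) :=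
    fun hne hc => hne (Subtype.ext hc)
  have HC : ∀ k : Fin n, ∑ t : ↥S, (h t : ℂ) * cvec (t : Fin n → ℤ) k = 0 := by
    intro k
    have h0 : ∑ t : ↥S, h t * (t : Fin n → ℤ) k = 0 := by
      have := congrFun Hrel k
      simpa [Finset.sum_apply, Pi.smul_apply, smul_eq_mul] using this
    have hcast := congrArg (Int.cast : ℤ → ℂ) h0
    push_cast at hcast
    simpa [cvec] using hcast
  have HB : ∀ v : Fin n, ∑ t : ↥S, (h t : ℂ) * (M *ᵥ cvec (t : Fin n → ℤ)) v = 0 := by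
    intro v
    rw [← mulVec_comb (M := M) Finset.univ (fun t : ↥S => (h t : ℂ))
      (fun t => cvec (t : Fin n → ℤ)) v]
    have hz : (fun j => ∑ t : ↥S, (h t : ℂ) * cvec (t : Fin n → ℤ) j) = (0 : Fin n → ℂ) := by
      funext j; exact HC j
    rw [hz, Matrix.mulVec_zero]
    rfl
  set adj : ↥S → ↥S → Prop :=
    fun t t' => t ≠ t' ∧ ∃ v, v ∈ Jset (t : Fin n → ℤ) ∧ v ∈ Jset (t' : Fin n → ℤ) with hadj
  have hbal2 : ∀ (t t' : ↥S), t ≠ t' → ∀ v, v ∈ Jset (t : Fin n → ℤ) →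
      v ∈ Jset (t' : Fin n → ℤ) →
      (h t : ℂ) * (M *ᵥ cvec (t : Fin n → ℤ)) v
        + (h t' : ℂ) * (M *ᵥ cvec (t' : Fin n → ℤ)) v = 0 := by
    intro t t' hne v hvt hvt'
    have hsub : ∑ u ∈ ({t, t'} : Finset ↥S), (h u : ℂ) * (M *ᵥ cvec (u : Fin n → ℤ)) v
        = ∑ u : ↥S, (h u : ℂ) * (M *ᵥ cvec (u : Fin n → ℤ)) v := by
      refine Finset.sum_subset (Finset.subset_univ _) ?_
      intro u _ hu
      simp only [Finset.mem_insert, Finset.mem_singleton] at hu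
      push_neg at hu
      by_cases hvu : v ∈ Jset (u : Fin n → ℤ)
      · exact (no_three hskew hTLS (hSm u) (hSm t) (hSm t')
          (hvalne hu.1) (hvalne hu.2) (hvalne hne) hvu hvt hvt').elim
      · rw [(hSm u).1.2.1 v hvu, mul_zero]
    rw [Finset.sum_pair hne] at hsub
    rw [hsub]; exact HB v
  have hstep : ∀ t t' : ↥S, adj t t' → 0 < h t → 0 < h t' := by
    rintro t t' ⟨hne, v, hvt, hvt'⟩ hpt
    obtain ⟨p, hp, hJ⟩ := Sset_pair (hSm t) hvt
    obtain ⟨p', hp', hJ'⟩ := Sset_pair (hSm t') hvt'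
    obtain ⟨eqP, hA, hA'⟩ := pairing hskew hTLS (hSm t) (hSm t') (hvalne hne) hp hp' hJ hJ'
    have hE := hbal2 t t' hne v hvt hvt'
    have hz' : (M *ᵥ cvec (t' : Fin n → ℤ)) v ≠ 0 := znonzero hskew hTLS (hSm t') hvt'
    have hzero : (M *ᵥ cvec (t' : Fin n → ℤ)) v *
        ((h t' : ℂ) * ((1 + (t' : Fin n → ℤ) p : ℤ) : ℂ)
          - (h t : ℂ) * ((1 + (t : Fin n → ℤ) p' : ℤ) : ℂ)) = 0 := by
      linear_combination ((1 + (t' : Fin n → ℤ) p : ℤ) : ℂ) * hE - (h t : ℂ) * eqP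
    have hCC : (h t' : ℂ) * ((1 + (t' : Fin n → ℤ) p : ℤ) : ℂ)
        = (h t : ℂ) * ((1 + (t : Fin n → ℤ) p' : ℤ) : ℂ) := by
      rcases mul_eq_zero.1 hzero with hcc | hcc
      · exact absurd hcc hz'
      · linear_combination hcc
    have hInt : h t' * (1 + (t' : Fin n → ℤ) p) = h t * (1 + (t : Fin n → ℤ) p') := by
      exact_mod_cast hCC
    nlinarith [mul_pos hpt hA']
  obtain ⟨M₀, hM₀⟩ := hW2
  haveI : DecidablePred (Relation.ReflTransGen adj t₀) := fun _ => Classical.dec _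
  set U : Finset ↥S := Finset.univ.filter (fun t => Relation.ReflTransGen adj t₀ t) with hU
  have ht₀U : t₀ ∈ U := by
    rw [hU, Finset.mem_filter]
    exact ⟨Finset.mem_univ _, Relation.ReflTransGen.refl⟩
  have hUpos : ∀ t, Relation.ReflTransGen adj t₀ t → 0 < h t := by
    intro t hRT
    induction hRT with
    | refl => exact hpos
    | tail _ hbc ih => exact hstep _ _ hbc ih
  have HUbal : ∀ v : Fin n, ∑ t ∈ U, (h t : ℂ) * (M *ᵥ cvec (t : Fin n → ℤ)) v = 0 := by
    intro v
    by_cases hex : ∃ t1 ∈ U, v ∈ Jset (t1 : Fin n → ℤ)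
    · obtain ⟨t1, ht1U, hvt1⟩ := hex
      have hsub : ∑ t ∈ U, (h t : ℂ) * (M *ᵥ cvec (t : Fin n → ℤ)) v
          = ∑ t : ↥S, (h t : ℂ) * (M *ᵥ cvec (t : Fin n → ℤ)) v := by
        refine Finset.sum_subset (Finset.subset_univ _) ?_
        intro u _ huU
        by_cases hvu : v ∈ Jset (u : Fin n → ℤ)
        · exfalso
          have hne : t1 ≠ u := by
            intro hc; rw [hc] at ht1U; exact huU ht1U
          have hRT1 : Relation.ReflTransGen adj t₀ t1 := (Finset.mem_filter.1 ht1U).2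
          have : Relation.ReflTransGen adj t₀ u :=
            Relation.ReflTransGen.tail hRT1 ⟨hne, v, hvt1, hvu⟩
          exact huU (Finset.mem_filter.2 ⟨Finset.mem_univ _, this⟩)
        · rw [(hSm u).1.2.1 v hvu, mul_zero]
      rw [hsub]; exact HB v
    · push_neg at hex
      refine Finset.sum_eq_zero fun t ht => ?_
      rw [(hSm t).1.2.1 v (hex t ht), mul_zero]
  set YZ : Fin n → ℤ := ∑ t ∈ U, h t • (t : Fin n → ℤ) with hYZ
  have hYcast : cvec YZ = (fun j => ∑ t ∈ U, (h t : ℂ) * cvec (t : Fin n → ℤ) j) := by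
    funext j
    simp only [cvec, hYZ, Finset.sum_apply, Pi.smul_apply, smul_eq_mul]
    push_cast
    rfl
  have hMY : M *ᵥ cvec YZ = 0 := by
    funext v
    rw [hYcast, mulVec_comb U (fun t : ↥S => (h t : ℂ)) (fun t => cvec (t : Fin n → ℤ)) v]
    simpa using HUbal v
  have hbY : bmap β (cvec YZ) = 0 := by
    rw [hYcast]
    simp only [bmap]
    have hterm : ∀ j : Fin n, (∑ t ∈ U, (h t : ℂ) * cvec (t : Fin n → ℤ) j) • β j
        = ∑ t ∈ U, (h t : ℂ) • ((cvec (t : Fin n → ℤ) j) • β j) := by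
      intro j
      rw [Finset.sum_smul]
      exact Finset.sum_congr rfl fun t _ => by rw [smul_smul]
    rw [Finset.sum_congr rfl (fun j _ => hterm j), Finset.sum_comm]
    refine Finset.sum_eq_zero fun t _ => ?_
    rw [← Finset.smul_sum]
    have hb := (hSm t).1.2.2
    simp only [bmap] at hb
    rw [hb, smul_zero]
  have hY0 : YZ = 0 := by
    have h00 := hTLS (cvec YZ) hMY hbY
    funext j
    have hj := congrFun h00 j
    simp only [cvec, Pi.zero_apply] at hj
    exact_mod_cast hj
  set Nsum : ℕ := ∑ t ∈ U, (h t).toNat with hNsum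
  have hN1 : 1 ≤ Nsum := by
    have h1 : 1 ≤ (h t₀).toNat := by omega
    exact le_trans h1 (Finset.single_le_sum (f := fun t : ↥S => (h t).toNat) (fun t _ => Nat.zero_le _) ht₀U)
  set L : Multiset (Fin n → ℤ) :=
    ∑ t ∈ U, Multiset.replicate ((M₀ + 1) * (h t).toNat) (t : Fin n → ℤ) with hL
  have hLmem : ∀ x ∈ L, x ∈ S := by
    intro x hx
    obtain ⟨t, -, hxeq⟩ := repl_mem U _ _ x hx
    rw [hxeq]; exact t.2
  have hLcard : Multiset.card L = (M₀ + 1) * Nsum := by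
    rw [hL, repl_card, hNsum, Finset.mul_sum]
  have hLsum : L.sum = 0 := by
    rw [hL, repl_sum]
    have hterm : ∀ t ∈ U, ((M₀ + 1) * (h t).toNat) • (t : Fin n → ℤ)
        = (M₀ + 1) • (h t • (t : Fin n → ℤ)) := by
      intro t ht
      have hht : ((h t).toNat : ℤ) = h t :=
        Int.toNat_of_nonneg (le_of_lt (hUpos t (Finset.mem_filter.1 ht).2))
      rw [mul_smul]
      congr 1
      rw [← natCast_zsmul, hht]
    rw [Finset.sum_congr rfl hterm, ← Finset.smul_sum, ← hYZ, hY0, smul_zero]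
  have hm : M₀ ≤ (M₀ + 1) * Nsum := by nlinarith
  refine hM₀ ((M₀ + 1) * Nsum) hm (0 : Fin n → ℤ) ⟨L, hLmem, hLcard, hLsum⟩ ⟨?_, ?_⟩
  · intro j; simp
  · rw [Jset_zero]; simp

lemma master (hskew : Mᵀ = -M) (hTLS : TLogSymp M β) {S : Set (Fin n → ℤ)}
    (hS : S ⊆ Sset M β) [Fintype ↥S]
    (hW2 : ∃ M₀ : ℕ, ∀ m, M₀ ≤ m → ∀ w ∈ SumOf S m,
      ¬((∀ j, -1 ≤ w j) ∧ (Jset w).card ≤ 2))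
    (h : ↥S → ℤ) (Hrel : ∑ t : ↥S, h t • (t : Fin n → ℤ) = 0) : ∀ t, h t = 0 := by
  intro t
  by_contra hne
  rcases lt_or_gt_of_ne hne with hlt | hgt
  · refine master_pos hskew hTLS hS hW2 (fun u => - h u) ?_ t (by show 0 < - h t; omega)
    have hsum : ∑ u : ↥S, (- h u) • (u : Fin n → ℤ)
        = - ∑ u : ↥S, h u • (u : Fin n → ℤ) := by
      rw [← Finset.sum_neg_distrib]
      exact Finset.sum_congr rfl fun u _ => by rw [neg_smul]
    rw [hsum, Hrel, neg_zero]
  · exact master_pos hskew hTLS hS hW2 h Hrel t hgt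

end Master


section Parts
variable {n : ℕ} {V : Type*} [AddCommGroup V] [Module ℂ V]
variable {M : Matrix (Fin n) (Fin n) ℂ} {β : Fin n → V}

lemma S_finite (hskew : Mᵀ = -M) (hTLS : TLogSymp M β) {S : Set (Fin n → ℤ)}
    (hS : S ⊆ Sset M β) : S.Finite := by
  have hinj : Set.InjOn Jset S := fun a ha b hb hab =>
    Jset_inj hskew hTLS (hS ha) (hS hb) hab
  exact Set.Finite.of_finite_image (Set.toFinite _) hinj

lemma part2 (hskew : Mᵀ = -M) (hTLS : TLogSymp M β) {S : Set (Fin n → ℤ)}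
    (hS : S ⊆ Sset M β)
    (hW2 : ∃ M₀ : ℕ, ∀ m, M₀ ≤ m → ∀ w ∈ SumOf S m,
      ¬((∀ j, -1 ≤ w j) ∧ (Jset w).card ≤ 2)) :
    LinearIndependent ℂ (fun θ : S => cvec (θ : Fin n → ℤ)) := by
  classical
  haveI : Fintype ↥S := (S_finite hskew hTLS hS).fintype
  rw [Fintype.linearIndependent_iff]
  intro g hg
  have hZ : ∀ h : ↥S → ℤ, ∑ t : ↥S, h t • (t : Fin n → ℤ) = 0 → ∀ t, h t = 0 :=
    master hskew hTLS hS hW2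
  -- ℚ-level injectivity, by clearing denominators
  have hQ : ∀ gq : ↥S → ℚ,
      (∀ j : Fin n, ∑ t : ↥S, gq t * (((t : Fin n → ℤ) j : ℤ) : ℚ) = 0) → ∀ t, gq t = 0 := by
    intro gq hrel t
    set D : ℤ := ∏ u : ↥S, ((gq u).den : ℤ) with hD
    have hDne : D ≠ 0 := by
      rw [hD]
      exact Finset.prod_ne_zero_iff.2 fun u _ => by exact_mod_cast (gq u).den_nz
    have hdvd : ∀ u : ↥S, ((gq u).den : ℤ) ∣ D :=
      fun u => Finset.dvd_prod_of_mem _ (Finset.mem_univ u)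
    set hzf : ↥S → ℤ := fun u => (gq u).num * (D / ((gq u).den : ℤ)) with hhzf
    have hcast : ∀ u : ↥S, ((hzf u : ℤ) : ℚ) = (D : ℚ) * gq u := by
      intro u
      obtain ⟨k, hk⟩ := hdvd u
      have hden0 : ((gq u).den : ℤ) ≠ 0 := by exact_mod_cast (gq u).den_nz
      have hDk : D / ((gq u).den : ℤ) = k := by
        rw [hk]; exact Int.mul_ediv_cancel_left _ hden0
      have hq0 : ((gq u).den : ℚ) ≠ 0 := by exact_mod_cast (gq u).den_nz
      have hnum : ((gq u).num : ℚ) = gq u * ((gq u).den : ℚ) := by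
        exact (Rat.mul_den_eq_num _).symm
      have hstep : ((hzf u : ℤ) : ℚ) = ((gq u).num : ℚ) * ((k : ℤ) : ℚ) := by
        rw [hhzf]; simp only []; rw [hDk]; push_cast; ring
      rw [hstep, hnum, hk]
      push_cast
      ring
    have hrelZ : ∑ u : ↥S, hzf u • (u : Fin n → ℤ) = 0 := by
      funext j
      have hqsum : ∑ u : ↥S, ((hzf u : ℤ) : ℚ) * (((u : Fin n → ℤ) j : ℤ) : ℚ) = 0 := by
        calc ∑ u : ↥S, ((hzf u : ℤ) : ℚ) * (((u : Fin n → ℤ) j : ℤ) : ℚ)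
            = ∑ u : ↥S, (D : ℚ) * (gq u * (((u : Fin n → ℤ) j : ℤ) : ℚ)) := by
              refine Finset.sum_congr rfl fun u _ => ?_
              rw [hcast u]; ring
          _ = (D : ℚ) * ∑ u : ↥S, gq u * (((u : Fin n → ℤ) j : ℤ) : ℚ) := by
              rw [Finset.mul_sum]
          _ = 0 := by rw [hrel j, mul_zero]
      have hcastsum : ((∑ u : ↥S, hzf u * (u : Fin n → ℤ) j : ℤ) : ℚ) = 0 := by
        push_cast
        exact hqsum
      have hZj : ∑ u : ↥S, hzf u * (u : Fin n → ℤ) j = 0 := by exact_mod_cast hcastsum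
      simp only [Finset.sum_apply, Pi.smul_apply, smul_eq_mul, Pi.zero_apply]
      exact hZj
    have hz0 : hzf t = 0 := hZ hzf hrelZ t
    have := hcast t
    rw [hz0] at this
    have hD0 : (D : ℚ) ≠ 0 := by exact_mod_cast hDne
    have hmul : (D : ℚ) * gq t = 0 := by rw [← this]; norm_num
    rcases mul_eq_zero.1 hmul with h | h
    · exact absurd h hD0
    · exact h
  -- transfer to ℂ via a left inverse matrix over ℚ
  set A : Matrix (Fin n) ↥S ℚ := Matrix.of (fun j t => (((t : Fin n → ℤ) j : ℤ) : ℚ)) with hA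
  have hker : LinearMap.ker (Matrix.toLin' A) = ⊥ := by
    rw [LinearMap.ker_eq_bot']
    intro gq hgq
    funext u
    refine hQ gq (fun j => ?_) u
    have := congrFun hgq j
    simp only [Matrix.toLin'_apply, Matrix.mulVec, dotProduct, hA, Matrix.of_apply,
      Pi.zero_apply] at this
    rw [← this]
    exact Finset.sum_congr rfl fun v _ => by ring
  obtain ⟨Bl, hBl⟩ := LinearMap.exists_leftInverse_of_injective (Matrix.toLin' A) hker
  set B := LinearMap.toMatrix' Bl with hB
  have hBA : B * A = 1 := by
    have h1 : B * LinearMap.toMatrix' (Matrix.toLin' A) = 1 := by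
      rw [hB, ← LinearMap.toMatrix'_comp, hBl, LinearMap.toMatrix'_id]
    rwa [LinearMap.toMatrix'_toLin'] at h1
  set φ : ℚ →+* ℂ := algebraMap ℚ ℂ with hφ
  have hBAC : (B.map φ) * (A.map φ) = 1 := by
    rw [← Matrix.map_mul, hBA]
    exact Matrix.map_one _ (map_zero φ) (map_one φ)
  have hAg : (A.map φ) *ᵥ g = 0 := by
    funext j
    have hgj := congrFun hg j
    simp only [Finset.sum_apply, Pi.smul_apply, smul_eq_mul, Pi.zero_apply] at hgj
    simp only [Matrix.mulVec, dotProduct, Matrix.map_apply, hA, Matrix.of_apply, Pi.zero_apply]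
    rw [← hgj]
    refine Finset.sum_congr rfl fun t _ => ?_
    rw [map_intCast]
    rw [mul_comm]
    rfl
  have hgz : g = 0 := by
    have h1 : (B.map φ) *ᵥ ((A.map φ) *ᵥ g) = g := by
      rw [Matrix.mulVec_mulVec, hBAC, Matrix.one_mulVec]
    rw [hAg, Matrix.mulVec_zero] at h1
    exact h1.symm
  intro i
  rw [hgz]
  rfl

end Parts


section Part1
variable {n : ℕ} {V : Type*} [AddCommGroup V] [Module ℂ V]
variable {M : Matrix (Fin n) (Fin n) ℂ} {β : Fin n → V}

lemma part1 (hskew : Mᵀ = -M) (hTLS : TLogSymp M β) {S : Set (Fin n → ℤ)}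
    (hS : S ⊆ Sset M β)
    (hW1 : ∀ w ∈ SumGE S 2, ¬((∀ j, -1 ≤ w j) ∧ (Jset w).card ≤ 1)) :
    ∃ M₀ : ℕ, ∀ m, M₀ ≤ m → ∀ w ∈ SumOf S m,
      ¬((∀ j, -1 ≤ w j) ∧ (Jset w).card ≤ 2) := by
  classical
  by_contra hcon
  push_neg at hcon
  have key : ∀ x : ℕ, ∃ m, x ≤ m ∧ ∃ w ∈ SumOf S m, (∀ j : Fin n, -1 ≤ w j) := by
    intro x
    obtain ⟨m, hm, w, hw, hp⟩ := hcon x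
    exact ⟨m, hm, w, hw, hp.1⟩
  set MS : Set ℕ := {m | ∃ w ∈ SumOf S m, (∀ j : Fin n, -1 ≤ w j)} with hMS
  have hinf : MS.Infinite := by
    intro hfin
    obtain ⟨b, hb⟩ := hfin.bddAbove
    obtain ⟨m, hm, w, hw, hp⟩ := key (b + 1)
    have : m ≤ b := hb ⟨w, hw, hp⟩
    omega
  haveI := Set.infinite_coe_iff.2 hinf
  haveI : DecidablePred (· ∈ MS) := fun _ => Classical.dec _
  set e := Nat.orderEmbeddingOfSet MS with he
  have hmem : ∀ k, e k ∈ MS := by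
    intro k
    have h1 : e k ∈ Set.range e := ⟨k, rfl⟩
    rwa [he, Nat.orderEmbeddingOfSet_range] at h1
  have hwit : ∀ k : ℕ, ∃ l : Multiset (Fin n → ℤ),
      (∀ x ∈ l, x ∈ S) ∧ Multiset.card l = e k ∧ (∀ j, -1 ≤ l.sum j) := by
    intro k
    obtain ⟨w, ⟨l, hl1, hl2, hl3⟩, hp⟩ := hmem k
    exact ⟨l, hl1, hl2, by rw [hl3]; exact hp⟩
  choose l hl1 hl2 hl3 using hwit
  have hSfin : S.Finite := S_finite hskew hTLS hS
  set S' : Finset (Fin n → ℤ) := hSfin.toFinset with hS'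
  have hmemS' : ∀ k, ∀ x ∈ l k, x ∈ S' := fun k x hx => hSfin.mem_toFinset.2 (hl1 k x hx)
  set G : ℕ → ((↥S' → ℕ) × (Fin n → ℕ)) :=
    fun k => (fun a => (l k).count (a : Fin n → ℤ), fun j => ((l k).sum j + 1).toNat) with hG
  have hpwo : (Set.univ : Set ((↥S' → ℕ) × (Fin n → ℕ))).IsPWO := by
    rw [← Set.univ_prod_univ]
    exact Set.IsPWO.prod
      (Set.isPWO_of_wellQuasiOrderedLE Set.univ)
      (Set.isPWO_of_wellQuasiOrderedLE Set.univ)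
  obtain ⟨i, j0, hij, hle⟩ := hpwo.exists_lt (f := G) (fun k => Set.mem_univ _)
  have hcle : ∀ a : ↥S', (l i).count (a : Fin n → ℤ) ≤ (l j0).count (a : Fin n → ℤ) :=
    fun a => hle.1 a
  have hwle : ∀ q : Fin n, (l i).sum q ≤ (l j0).sum q := by
    intro q
    have h2 := hle.2 q
    have hi := hl3 i q
    have hj := hl3 j0 q
    simp only [hG] at h2
    omega
  have hcle' : ∀ a ∈ S', (l i).count a ≤ (l j0).count a := fun a ha => hcle ⟨a, ha⟩
  set d : (Fin n → ℤ) → ℕ := fun a => (l j0).count a - (l i).count a with hd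
  have hdsum : ∑ a ∈ S', d a • a = (l j0).sum - (l i).sum := by
    rw [multiset_sum_count' (l i) S' (hmemS' i), multiset_sum_count' (l j0) S' (hmemS' j0),
      ← Finset.sum_sub_distrib]
    refine Finset.sum_congr rfl fun a ha => ?_
    have hle' := hcle' a ha
    have hsub : d a + (l i).count a = (l j0).count a := Nat.sub_add_cancel hle'
    calc d a • a = (d a • a + (l i).count a • a) - (l i).count a • a := by abel
      _ = (l j0).count a • a - (l i).count a • a := by rw [← add_nsmul, hsub]
  have hcards : Multiset.card (l i) < Multiset.card (l j0) := by
    rw [hl2 i, hl2 j0]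
    exact e.strictMono hij
  have hdpos : 1 ≤ ∑ a ∈ S', d a := by
    have hsum_eq : ∑ a ∈ S', d a + ∑ a ∈ S', (l i).count a = ∑ a ∈ S', (l j0).count a := by
      rw [← Finset.sum_add_distrib]
      exact Finset.sum_congr rfl fun a ha => Nat.sub_add_cancel (hcle' a ha)
    have h1 := multiset_card_count (l i) S' (hmemS' i)
    have h2 := multiset_card_count (l j0) S' (hmemS' j0)
    omega
  set LL : Multiset (Fin n → ℤ) := ∑ a ∈ S', Multiset.replicate (2 * d a) a with hLL
  have hLLmem : ∀ x ∈ LL, x ∈ S := by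
    intro x hx
    obtain ⟨a, ha, hxe⟩ := repl_mem S' (fun a => 2 * d a) (fun a => a) x hx
    rw [hxe]
    exact hSfin.mem_toFinset.1 ha
  have hLLcard : Multiset.card LL = 2 * ∑ a ∈ S', d a := by
    rw [hLL, repl_card, Finset.mul_sum]
  have hLLsum : LL.sum = 2 • ((l j0).sum - (l i).sum) := by
    rw [hLL, repl_sum, ← hdsum, Finset.smul_sum]
    exact Finset.sum_congr rfl fun a _ => mul_smul 2 (d a) a
  have hLLq : ∀ q, LL.sum q = 2 * ((l j0).sum q - (l i).sum q) := by
    intro q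
    rw [hLLsum]
    simp only [Pi.smul_apply, Pi.sub_apply, nsmul_eq_mul]
    push_cast
    ring
  have hmemGE : LL.sum ∈ SumGE S 2 := by
    refine ⟨Multiset.card LL, by omega, LL, hLLmem, rfl, rfl⟩
  refine hW1 _ hmemGE ⟨?_, ?_⟩
  · intro q
    have h1 := hwle q
    have h2 := hLLq q
    omega
  · have hempty : Jset LL.sum = ∅ := by
      apply Finset.eq_empty_of_forall_notMem
      intro q hq
      have h1 := mem_Jset.1 hq
      have h2 := hLLq q
      have h3 := hwle q
      omega
    rw [hempty]
    simp

end Part1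


theorem stmt6 (n : ℕ) (hn : 0 < n) (M : Matrix (Fin n) (Fin n) ℂ) (hskew : Mᵀ = -M)
    {V : Type*} [AddCommGroup V] [Module ℂ V] (β : Fin n → V)
    (hTLS : TLogSymp M β) (S : Set (Fin n → ℤ)) (hS : S ⊆ Sset M β) :
    ((∀ w ∈ SumGE S 2, ¬((∀ j, -1 ≤ w j) ∧ (Jset w).card ≤ 1)) →
      ∃ M₀ : ℕ, ∀ m, M₀ ≤ m → ∀ w ∈ SumOf S m,
        ¬((∀ j, -1 ≤ w j) ∧ (Jset w).card ≤ 2)) ∧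
    ((∃ M₀ : ℕ, ∀ m, M₀ ≤ m → ∀ w ∈ SumOf S m,
        ¬((∀ j, -1 ≤ w j) ∧ (Jset w).card ≤ 2)) →
      LinearIndependent ℂ (fun θ : S => cvec (θ : Fin n → ℤ))) := by
  constructor
  · intro hW1
    exact part1 hskew hTLS hS hW1
  · intro hW2
    exact part2 hskew hTLS hS hW2
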